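/- Let F_1 be a square matrix whose only eigenvalues are 0 and -1/\tau for some \tau > 0, diagonalizable as V^{-1} F_1 V = -(1/\tau)\Pi_- with \Pi_- a projector, and let F_2, F_3 be rectangular matrices satisfying the algebraic relations F_1 F_2 = -F_2, F_1 F_3 = -F_3, F_2(F_1 \otimes I) = F_2(I \otimes F_1) = 0, F_3(F_1 \otimes I^{\otimes 2}) = F_3(I \otimes F_1 \otimes I) = F_3(I^{\otimes 2} \otimes F_1) = 0, F_2(F_2 \otimes I) = F_2(I \otimes F_2) = 0, F_2(F_3 \otimes I) = F_2(I \otimes F_3) = 0. Then the function f(t) = e^{F_1 t} f(0) + (1 - e^{-t})[F_2 f(0)^{\otimes 2} + F_3 f(0)^{\otimes 3}] solves the ODE df/dt = F_1 f + F_2 f^{\otimes 2} + F_3 f^{\otimes 3}. -/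

import Mathlib

open Kronecker

-- scalar sum lemma
lemma scalar_shift (γ : ℂ) (hγ : γ ≠ 0) :
    ∑' k : ℕ, ((((k+1).factorial : ℂ))⁻¹ * γ ^ k) = γ⁻¹ * (Complex.exp γ - 1) := by
  have hs : Summable fun n : ℕ => ((n.factorial : ℂ)⁻¹) • γ ^ n := NormedSpace.expSeries_summable' γ
  have hexp : Complex.exp γ = ∑' n : ℕ, ((n.factorial : ℂ)⁻¹) • γ ^ n := by
    rw [Complex.exp_eq_exp_ℂ, NormedSpace.exp_eq_tsum ℂ]
  have hsplit : Complex.exp γ = 1 + ∑' k : ℕ, ((((k+1).factorial : ℂ))⁻¹) • γ ^ (k+1) := by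
    rw [hexp, Summable.tsum_eq_zero_add hs]; simp
  have h1 : Summable fun k : ℕ => ((((k+1).factorial : ℂ))⁻¹) * γ ^ (k+1) := by
    have := (summable_nat_add_iff 1).mpr hs
    simpa [smul_eq_mul] using this
  have h2 : Summable fun k : ℕ => ((((k+1).factorial : ℂ))⁻¹) * γ ^ k := by
    have := h1.mul_left γ⁻¹
    refine this.congr fun k => ?_
    field_simp [pow_succ]
    ring
  have key : γ * ∑' k : ℕ, ((((k+1).factorial : ℂ))⁻¹ * γ ^ k) = Complex.exp γ - 1 := by
    rw [← h2.tsum_mul_left γ]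
    have : ∀ k : ℕ, γ * ((((k+1).factorial : ℂ))⁻¹ * γ ^ k) = ((((k+1).factorial : ℂ))⁻¹) • γ ^ (k+1) := by
      intro k; simp [smul_eq_mul, pow_succ]; ring
    rw [tsum_congr this]
    rw [eq_sub_iff_add_eq, add_comm, ← hsplit]
  field_simp at key ⊢
  rw [mul_comm] at key
  linear_combination key

lemma summable_shift (γ : ℂ) : Summable fun k : ℕ => ((((k+1).factorial : ℂ))⁻¹) * γ ^ k := by
  have hs : Summable fun n : ℕ => ((n.factorial : ℂ)⁻¹) • γ ^ n := NormedSpace.expSeries_summable' γ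
  have h1 : Summable fun k : ℕ => ((((k+1).factorial : ℂ))⁻¹) * γ ^ (k+1) := by
    have := (summable_nat_add_iff 1).mpr hs
    simpa [smul_eq_mul] using this
  rcases eq_or_ne γ 0 with rfl | hγ
  · apply summable_of_ne_finset_zero (s := {0}); intro k hk
    simp at hk; simp [hk]
  · have := h1.mul_left γ⁻¹
    refine this.congr fun k => ?_
    field_simp [pow_succ]
    ring

lemma exp_of_sq (Q : ℕ) (A : Matrix (Fin Q) (Fin Q) ℂ) (γ : ℂ) (hγ : γ ≠ 0)
    (h : A * A = γ • A) :
    NormedSpace.exp A = 1 + (γ⁻¹ * (Complex.exp γ - 1)) • A := by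
  letI : SeminormedRing (Matrix (Fin Q) (Fin Q) ℂ) := Matrix.linftyOpSemiNormedRing
  letI : NormedRing (Matrix (Fin Q) (Fin Q) ℂ) := Matrix.linftyOpNormedRing
  letI : NormedAlgebra ℂ (Matrix (Fin Q) (Fin Q) ℂ) := Matrix.linftyOpNormedAlgebra
  have hpow : ∀ k : ℕ, A ^ (k+1) = γ ^ k • A := by
    intro k; induction k with
    | zero => simp
    | succ n ih =>
      rw [pow_succ, ih, smul_mul_assoc, h, smul_smul, pow_succ]
  have hs : Summable fun k : ℕ => ((k.factorial : ℂ)⁻¹) • A ^ k :=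
    NormedSpace.expSeries_summable' A
  rw [NormedSpace.exp_eq_tsum ℂ]
  show (∑' k : ℕ, ((k.factorial : ℂ)⁻¹) • A ^ k) = _
  rw [Summable.tsum_eq_zero_add hs]
  simp only [pow_zero, Nat.factorial_zero, Nat.cast_one, inv_one, one_smul]
  congr 1
  calc ∑' k : ℕ, ((((k+1).factorial : ℂ))⁻¹) • A ^ (k+1)
      = ∑' k : ℕ, (((((k+1).factorial : ℂ))⁻¹) * γ ^ k) • A := by
        refine tsum_congr fun k => ?_
        rw [hpow k, smul_smul]
    _ = (∑' k : ℕ, ((((k+1).factorial : ℂ))⁻¹) * γ ^ k) • A :=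
        Summable.tsum_smul_const (summable_shift γ) A
    _ = (γ⁻¹ * (Complex.exp γ - 1)) • A := by rw [scalar_shift γ hγ]

lemma kron_mulVec {α β γ' δ : Type*} [Fintype β] [Fintype δ]
    (A : Matrix α β ℂ) (B : Matrix γ' δ ℂ) (v : β → ℂ) (w : δ → ℂ) :
    (A ⊗ₖ B).mulVec (fun p => v p.1 * w p.2)
      = fun p => A.mulVec v p.1 * B.mulVec w p.2 := by
  funext p
  simp only [Matrix.mulVec, dotProduct, Matrix.kroneckerMap_apply, Fintype.sum_prod_type]
  rw [Finset.sum_mul_sum]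
  exact Finset.sum_congr rfl fun j _ => Finset.sum_congr rfl fun k _ => by ring


/-- **Explicit solution of the purely collisional discrete Boltzmann equation.**
Let `F₁` be a `Q×Q` matrix whose only eigenvalues are `0` and `-1/τ` (`τ > 0`),
diagonalizable as `V⁻¹ F₁ V = -(1/τ)·Π₋` with `Π₋` a projector, and let `F₂ : Q×Q²`,
`F₃ : Q×Q³` satisfy `F₁F₂ = -F₂`, `F₁F₃ = -F₃`, `F₂(F₁⊗I) = F₂(I⊗F₁) = 0`,
`F₃(F₁⊗I⊗I) = F₃(I⊗F₁⊗I) = F₃(I⊗I⊗F₁) = 0`, `F₂(F₂⊗I) = F₂(I⊗F₂) = 0`,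
`F₂(F₃⊗I) = F₂(I⊗F₃) = 0`. Then
`f(t) = e^{F₁t} f(0) + (1 - e^{-t})[F₂ f(0)^{⊗2} + F₃ f(0)^{⊗3}]`
solves the ODE `df/dt = F₁ f + F₂ f^{⊗2} + F₃ f^{⊗3}`. -/
theorem purely_collisional_solution
    (Q : ℕ) (τ : ℝ) (hτ : 0 < τ)
    (F₁ : Matrix (Fin Q) (Fin Q) ℂ)
    (F₂ : Matrix (Fin Q) (Fin Q × Fin Q) ℂ)
    (F₃ : Matrix (Fin Q) (Fin Q × Fin Q × Fin Q) ℂ)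
    (V : Matrix (Fin Q) (Fin Q) ℂ) (hV : IsUnit V)
    (P : Matrix (Fin Q) (Fin Q) ℂ) (hP : P * P = P)
    (hdiag : V⁻¹ * F₁ * V = -((1 / τ : ℂ) • P))
    (h12 : F₁ * F₂ = -F₂)
    (h13 : F₁ * F₃ = -F₃)
    (h21 : F₂ * (F₁ ⊗ₖ (1 : Matrix (Fin Q) (Fin Q) ℂ)) = 0)
    (h21' : F₂ * ((1 : Matrix (Fin Q) (Fin Q) ℂ) ⊗ₖ F₁) = 0)
    (h31 : F₃ * (F₁ ⊗ₖ (1 : Matrix (Fin Q × Fin Q) (Fin Q × Fin Q) ℂ)) = 0)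
    (h31' : F₃ * ((1 : Matrix (Fin Q) (Fin Q) ℂ) ⊗ₖ (F₁ ⊗ₖ (1 : Matrix (Fin Q) (Fin Q) ℂ))) = 0)
    (h31'' : F₃ * ((1 : Matrix (Fin Q) (Fin Q) ℂ) ⊗ₖ ((1 : Matrix (Fin Q) (Fin Q) ℂ) ⊗ₖ F₁)) = 0)
    (h22 : F₂ * (F₂ ⊗ₖ (1 : Matrix (Fin Q) (Fin Q) ℂ)) = 0)
    (h22' : F₂ * ((1 : Matrix (Fin Q) (Fin Q) ℂ) ⊗ₖ F₂) = 0)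
    (h23 : F₂ * (F₃ ⊗ₖ (1 : Matrix (Fin Q) (Fin Q) ℂ)) = 0)
    (h23' : F₂ * ((1 : Matrix (Fin Q) (Fin Q) ℂ) ⊗ₖ F₃) = 0)
    (f0 : Fin Q → ℂ) (f : ℝ → Fin Q → ℂ)
    (hf : f = fun t : ℝ =>
      (NormedSpace.exp ((t : ℂ) • F₁)).mulVec f0
        + ((1 - Real.exp (-t) : ℝ) : ℂ) •
            (F₂.mulVec (fun p => f0 p.1 * f0 p.2)
              + F₃.mulVec (fun p => f0 p.1 * f0 p.2.1 * f0 p.2.2))) :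
    ∀ t : ℝ, HasDerivAt f
      (F₁.mulVec (f t) + F₂.mulVec (fun p => f t p.1 * f t p.2)
        + F₃.mulVec (fun p => f t p.1 * f t p.2.1 * f t p.2.2)) t := by
  intro t
  have hτ0 : τ ≠ 0 := ne_of_gt hτ
  have hτC : (τ : ℂ) ≠ 0 := by exact_mod_cast hτ0
  set β : ℂ := -(1 / (τ : ℂ)) with hβ
  have hβ0 : β ≠ 0 := by
    rw [hβ]; simp [hτC]
  have hVd : IsUnit V.det := (Matrix.isUnit_iff_isUnit_det V).mp hV
  have hVV : V * V⁻¹ = 1 := Matrix.mul_nonsing_inv V hVd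
  have hVV' : V⁻¹ * V = 1 := Matrix.nonsing_inv_mul V hVd
  -- F₁ in conjugated form
  have hF₁ : F₁ = V * (β • P) * V⁻¹ := by
    have e1 : V * (V⁻¹ * F₁ * V) * V⁻¹ = F₁ := by
      simp only [Matrix.mul_assoc]
      rw [hVV, Matrix.mul_one, ← Matrix.mul_assoc, hVV, Matrix.one_mul]
    rw [← e1, hdiag, hβ]
    congr 1
    congr 1
    rw [neg_smul]
  -- F₁² = β • F₁
  have conj_mul : ∀ (A B : Matrix (Fin Q) (Fin Q) ℂ),
      (V * A * V⁻¹) * (V * B * V⁻¹) = V * (A * B) * V⁻¹ := by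
    intro A B
    calc (V * A * V⁻¹) * (V * B * V⁻¹) = V * A * (V⁻¹ * V) * B * V⁻¹ := by
          simp only [Matrix.mul_assoc]
      _ = V * (A * B) * V⁻¹ := by
          rw [hVV', Matrix.mul_one]; simp only [Matrix.mul_assoc]
  have hsq : F₁ * F₁ = β • F₁ := by
    rw [hF₁, conj_mul]
    have : (β • P) * (β • P) = β • (β • P) := by
      rw [Matrix.smul_mul, Matrix.mul_smul, hP]
    rw [this, Matrix.mul_smul, Matrix.smul_mul]
  -- closed form for the exponential
  have hexp : ∀ s : ℝ, NormedSpace.exp ((s : ℂ) • F₁)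
      = 1 + ((τ : ℂ) * (1 - ((Real.exp (-s/τ) : ℝ) : ℂ))) • F₁ := by
    intro s
    rcases eq_or_ne s 0 with rfl | hs
    · simp [NormedSpace.exp_zero]
    · have hsC : (s : ℂ) ≠ 0 := by exact_mod_cast hs
      have hγ : (s : ℂ) * β ≠ 0 := mul_ne_zero hsC hβ0
      have hA : ((s : ℂ) • F₁) * ((s : ℂ) • F₁) = ((s : ℂ) * β) • ((s : ℂ) • F₁) := by
        rw [Matrix.smul_mul, Matrix.mul_smul, hsq, smul_smul, smul_smul, smul_smul]
        ring_nf
      have hcast : ((s : ℂ) * β) = (((-s/τ) : ℝ) : ℂ) := by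
        rw [hβ]; push_cast; field_simp
      have hscal : (((s : ℂ) * β)⁻¹ * (Complex.exp ((s : ℂ) * β) - 1)) * (s : ℂ)
          = (τ : ℂ) * (1 - ((Real.exp (-s/τ) : ℝ) : ℂ)) := by
        rw [hcast, ← Complex.ofReal_exp]
        have hne : ((((-s/τ) : ℝ)) : ℂ) ≠ 0 := by
          push_cast
          exact div_ne_zero (neg_ne_zero.mpr hsC) hτC
        push_cast
        have hss : (↑s : ℂ) * (↑s : ℂ)⁻¹ = 1 := mul_inv_cancel₀ hsC
        field_simp
        linear_combination (0:ℂ) * hss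
      rw [exp_of_sq Q _ _ hγ hA, smul_smul, hscal]
  -- abbreviations
  set q2 : Fin Q × Fin Q → ℂ := fun p => f0 p.1 * f0 p.2 with hq2
  set q3 : Fin Q × Fin Q × Fin Q → ℂ := fun p => f0 p.1 * f0 p.2.1 * f0 p.2.2 with hq3
  set u : Fin Q → ℂ := F₁.mulVec f0 with hu
  set g : Fin Q → ℂ := F₂.mulVec q2 + F₃.mulVec q3 with hg
  set cc : ℝ → ℂ := fun s => (τ : ℂ) * (1 - ((Real.exp (-s/τ) : ℝ) : ℂ)) with hcc
  set ee : ℝ → ℂ := fun s => ((1 - Real.exp (-s) : ℝ) : ℂ) with hee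
  -- closed affine form of f
  have hft : ∀ s : ℝ, f s = f0 + cc s • u + ee s • g := by
    intro s
    rw [hf]
    simp only []
    rw [hexp s, Matrix.add_mulVec, Matrix.one_mulVec, Matrix.smul_mulVec]
  -- basic mulVec facts
  have huF : F₁.mulVec u = β • u := by
    rw [hu, Matrix.mulVec_mulVec, hsq, Matrix.smul_mulVec]
  have hgF : F₁.mulVec g = -g := by
    rw [hg, Matrix.mulVec_add, Matrix.mulVec_mulVec, Matrix.mulVec_mulVec, h12, h13,
      Matrix.neg_mulVec, Matrix.neg_mulVec, neg_add]
  -- the witness w with f t = f0 + F₁ w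
  set w : Fin Q → ℂ := cc t • f0 - ee t • g with hwdef
  have hwv : F₁.mulVec w = cc t • u + ee t • g := by
    rw [hwdef, Matrix.mulVec_sub, Matrix.mulVec_smul, Matrix.mulVec_smul, hgF, ← hu,
      smul_neg, sub_neg_eq_add]
  have hw : f t = f0 + F₁.mulVec w := by
    rw [hft t, hwv, add_assoc]
  -- vanishing lemmas
  have key2a : ∀ (v w' : Fin Q → ℂ),
      F₂.mulVec (fun p => F₁.mulVec w' p.1 * v p.2) = 0 := by
    intro v w'
    have hk := kron_mulVec F₁ (1 : Matrix (Fin Q) (Fin Q) ℂ) w' v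
    rw [Matrix.one_mulVec] at hk
    rw [← hk, Matrix.mulVec_mulVec, h21, Matrix.zero_mulVec]
  have key2b : ∀ (v w' : Fin Q → ℂ),
      F₂.mulVec (fun p => v p.1 * F₁.mulVec w' p.2) = 0 := by
    intro v w'
    have hk := kron_mulVec (1 : Matrix (Fin Q) (Fin Q) ℂ) F₁ v w'
    rw [Matrix.one_mulVec] at hk
    rw [← hk, Matrix.mulVec_mulVec, h21', Matrix.zero_mulVec]
  have key3a : ∀ (v₂ v₃ w' : Fin Q → ℂ),
      F₃.mulVec (fun p => F₁.mulVec w' p.1 * v₂ p.2.1 * v₃ p.2.2) = 0 := by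
    intro v₂ v₃ w'
    have hk := kron_mulVec F₁ (1 : Matrix (Fin Q × Fin Q) (Fin Q × Fin Q) ℂ) w'
      (fun q : Fin Q × Fin Q => v₂ q.1 * v₃ q.2)
    rw [Matrix.one_mulVec] at hk
    have he : (fun p : Fin Q × Fin Q × Fin Q => F₁.mulVec w' p.1 * v₂ p.2.1 * v₃ p.2.2)
        = (F₁ ⊗ₖ (1 : Matrix (Fin Q × Fin Q) (Fin Q × Fin Q) ℂ)).mulVec
            (fun p => w' p.1 * (v₂ p.2.1 * v₃ p.2.2)) := by
      funext p
      have h' := congrFun hk p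
      calc F₁.mulVec w' p.1 * v₂ p.2.1 * v₃ p.2.2
          = F₁.mulVec w' p.1 * (v₂ p.2.1 * v₃ p.2.2) := mul_assoc _ _ _
        _ = _ := h'.symm
    rw [he, Matrix.mulVec_mulVec, h31, Matrix.zero_mulVec]
  have key3b : ∀ (v₁ v₃ w' : Fin Q → ℂ),
      F₃.mulVec (fun p => v₁ p.1 * F₁.mulVec w' p.2.1 * v₃ p.2.2) = 0 := by
    intro v₁ v₃ w'
    have hkin := kron_mulVec F₁ (1 : Matrix (Fin Q) (Fin Q) ℂ) w' v₃
    rw [Matrix.one_mulVec] at hkin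
    have hk := kron_mulVec (1 : Matrix (Fin Q) (Fin Q) ℂ)
      (F₁ ⊗ₖ (1 : Matrix (Fin Q) (Fin Q) ℂ)) v₁ (fun q : Fin Q × Fin Q => w' q.1 * v₃ q.2)
    rw [Matrix.one_mulVec, hkin] at hk
    have he : (fun p : Fin Q × Fin Q × Fin Q => v₁ p.1 * F₁.mulVec w' p.2.1 * v₃ p.2.2)
        = ((1 : Matrix (Fin Q) (Fin Q) ℂ) ⊗ₖ (F₁ ⊗ₖ (1 : Matrix (Fin Q) (Fin Q) ℂ))).mulVec
            (fun p => v₁ p.1 * (w' p.2.1 * v₃ p.2.2)) := by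
      funext p
      have h' := congrFun hk p
      calc v₁ p.1 * F₁.mulVec w' p.2.1 * v₃ p.2.2
          = v₁ p.1 * (F₁.mulVec w' p.2.1 * v₃ p.2.2) := mul_assoc _ _ _
        _ = _ := h'.symm
    rw [he, Matrix.mulVec_mulVec, h31', Matrix.zero_mulVec]
  have key3c : ∀ (v₁ v₂ w' : Fin Q → ℂ),
      F₃.mulVec (fun p => v₁ p.1 * v₂ p.2.1 * F₁.mulVec w' p.2.2) = 0 := by
    intro v₁ v₂ w'
    have hkin := kron_mulVec (1 : Matrix (Fin Q) (Fin Q) ℂ) F₁ v₂ w'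
    rw [Matrix.one_mulVec] at hkin
    have hk := kron_mulVec (1 : Matrix (Fin Q) (Fin Q) ℂ)
      ((1 : Matrix (Fin Q) (Fin Q) ℂ) ⊗ₖ F₁) v₁ (fun q : Fin Q × Fin Q => v₂ q.1 * w' q.2)
    rw [Matrix.one_mulVec, hkin] at hk
    have he : (fun p : Fin Q × Fin Q × Fin Q => v₁ p.1 * v₂ p.2.1 * F₁.mulVec w' p.2.2)
        = ((1 : Matrix (Fin Q) (Fin Q) ℂ) ⊗ₖ ((1 : Matrix (Fin Q) (Fin Q) ℂ) ⊗ₖ F₁)).mulVec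
            (fun p => v₁ p.1 * (v₂ p.2.1 * w' p.2.2)) := by
      funext p
      have h' := congrFun hk p
      calc v₁ p.1 * v₂ p.2.1 * F₁.mulVec w' p.2.2
          = v₁ p.1 * (v₂ p.2.1 * F₁.mulVec w' p.2.2) := mul_assoc _ _ _
        _ = _ := h'.symm
    rw [he, Matrix.mulVec_mulVec, h31'', Matrix.zero_mulVec]
  -- invariance of quadratic and cubic terms
  have hB : F₂.mulVec (fun p => f t p.1 * f t p.2) = F₂.mulVec q2 := by
    have expand2 : (fun p : Fin Q × Fin Q => f t p.1 * f t p.2)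
        = q2 + ((fun p : Fin Q × Fin Q => F₁.mulVec w p.1 * f t p.2)
          + (fun p : Fin Q × Fin Q => f0 p.1 * F₁.mulVec w p.2)) := by
      funext p
      simp only [Pi.add_apply, hq2]
      rw [hw]
      simp only [Pi.add_apply]
      ring
    rw [expand2, Matrix.mulVec_add, Matrix.mulVec_add, key2a, key2b, add_zero, add_zero]
  have hC : F₃.mulVec (fun p => f t p.1 * f t p.2.1 * f t p.2.2) = F₃.mulVec q3 := by
    have expand3 : (fun p : Fin Q × Fin Q × Fin Q => f t p.1 * f t p.2.1 * f t p.2.2)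
        = q3 + ((fun p : Fin Q × Fin Q × Fin Q => F₁.mulVec w p.1 * f t p.2.1 * f t p.2.2)
          + ((fun p : Fin Q × Fin Q × Fin Q => f0 p.1 * F₁.mulVec w p.2.1 * f t p.2.2)
            + (fun p : Fin Q × Fin Q × Fin Q => f0 p.1 * f0 p.2.1 * F₁.mulVec w p.2.2))) := by
      funext p
      simp only [Pi.add_apply, hq3]
      rw [hw]
      simp only [Pi.add_apply]
      ring
    rw [expand3, Matrix.mulVec_add, Matrix.mulVec_add, Matrix.mulVec_add,
      key3a, key3b, key3c, add_zero, add_zero, add_zero]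
  -- the value of the vector field at f t
  have hA' : F₁.mulVec (f t) = u + cc t • (β • u) + ee t • (-g) := by
    rw [hft t, Matrix.mulVec_add, Matrix.mulVec_add, Matrix.mulVec_smul, Matrix.mulVec_smul,
      huF, hgF]
  have hs1 : (1 : ℂ) + cc t * β = ((Real.exp (-t/τ) : ℝ) : ℂ) := by
    rw [hcc, hβ]
    field_simp
    ring
  have hs2 : (1 : ℂ) - ee t = ((Real.exp (-t) : ℝ) : ℂ) := by
    rw [hee]; push_cast; ring
  have hval : F₁.mulVec (f t) + F₂.mulVec (fun p => f t p.1 * f t p.2)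
        + F₃.mulVec (fun p => f t p.1 * f t p.2.1 * f t p.2.2)
      = ((Real.exp (-t/τ) : ℝ) : ℂ) • u + ((Real.exp (-t) : ℝ) : ℂ) • g := by
    rw [hA', hB, hC, ← hs1, ← hs2]
    rw [add_assoc (u + cc t • (β • u) + ee t • (-g)) (F₂.mulVec q2) (F₃.mulVec q3), ← hg]
    module
  rw [hval]
  -- derivative computation
  have hfeq : f = fun s => f0 + cc s • u + ee s • g := funext hft
  rw [hfeq]
  have hcd : HasDerivAt cc (((Real.exp (-t/τ) : ℝ) : ℂ)) t := by
    have h0 : HasDerivAt (fun s : ℝ => -s/τ) (-1/τ) t := by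
      simpa using ((hasDerivAt_id t).neg.div_const τ)
    have hr : HasDerivAt (fun s : ℝ => Real.exp (-s/τ)) (Real.exp (-t/τ) * (-1/τ)) t :=
      h0.exp
    have hrc := hr.ofReal_comp
    have := (hrc.const_sub (1 : ℂ)).const_mul (τ : ℂ)
    convert this using 1
    · rfl
    push_cast
    field_simp
  have hed : HasDerivAt ee (((Real.exp (-t) : ℝ) : ℂ)) t := by
    have h0 : HasDerivAt (fun s : ℝ => -s) (-1 : ℝ) t := by
      exact hasDerivAt_neg t
    have hr : HasDerivAt (fun s : ℝ => Real.exp (-s)) (Real.exp (-t) * (-1)) t :=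
      h0.exp
    have hrc := hr.ofReal_comp
    have h1 := hrc.const_sub (1 : ℂ)
    have heeq : ee = fun s : ℝ => (1 : ℂ) - ((Real.exp (-s) : ℝ) : ℂ) := by
      funext s; rw [hee]; push_cast; ring
    rw [heeq]
    convert h1 using 1
    · rfl
    push_cast
    ring
  exact ((hcd.smul_const u).const_add f0).add (hed.smul_const g)
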